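/- Suppose f ∈ 𝒪(Ω) and for every compact L ⊂ Ω, sup_{x∈L, t≤0} |f(φ(t,x))/Q(φ(t,x))| < ∞. Then (K₊f)(x,h) is holomorphic in x on Ω and solves the linear ODE d/dx (K₊f)(x,h) + (2√(Q(x))/h − Q'(x)/(2Q(x)))·(K₊f)(x,h) = f(x). -/

import Mathlib

open MeasureTheory Set Metric

set_option maxHeartbeats 1000000

lemma aux_uniq {v : ℂ → ℂ} {Ω : Set ℂ} (hΩ : IsOpen Ω) (hv : DifferentiableOn ℂ v Ω)
    {α β : ℝ → ℂ}
    (hα : ∀ t ≤ (0:ℝ), HasDerivAt α (v (α t)) t) (hαΩ : ∀ t ≤ (0:ℝ), α t ∈ Ω)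
    (hβ : ∀ t ≤ (0:ℝ), HasDerivAt β (v (β t)) t) (hβΩ : ∀ t ≤ (0:ℝ), β t ∈ Ω)
    (h0 : α 0 = β 0) : ∀ t ≤ (0:ℝ), α t = β t := by
  intro a ha
  set S : Set ℝ := {t | t ∈ Icc a 0 ∧ α t = β t} with hSdef
  have hcont : ContinuousOn (fun t => α t - β t) (Icc a 0) := fun t ht =>
    (((hα t ht.2).continuousAt.sub (hβ t ht.2).continuousAt)).continuousWithinAt
  have hSclosed : IsClosed S := by
    have : S = Icc a 0 ∩ (fun t => α t - β t) ⁻¹' {0} := by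
      ext t; simp [hSdef, sub_eq_zero, and_comm]
    rw [this]
    exact hcont.preimage_isClosed_of_isClosed isClosed_Icc isClosed_singleton
  have hScomp : IsCompact S := isCompact_Icc.of_isClosed_subset hSclosed (fun t ht => ht.1)
  have hS0 : (0:ℝ) ∈ S := ⟨⟨ha, le_rfl⟩, h0⟩
  have hSne : S.Nonempty := ⟨0, hS0⟩
  have hc := hScomp.sInf_mem hSne
  set c := sInf S with hcdef
  have hcIcc : c ∈ Icc a 0 := hc.1
  rcases eq_or_lt_of_le hcIcc.1 with heq | hlt
  · rw [heq]; exact hc.2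
  · exfalso
    have hy₀ : α c ∈ Ω := hαΩ c hcIcc.2
    have hCD : ContDiffAt ℂ 1 v (α c) :=
      (hv.contDiffOn hΩ).contDiffAt (hΩ.mem_nhds hy₀)
    obtain ⟨K, U, hU, hL⟩ := hCD.exists_lipschitzOnWith
    have hUβ : U ∈ nhds (β c) := by rw [← hc.2]; exact hU
    have hev : ∀ᶠ t in nhds c, α t ∈ U ∧ β t ∈ U :=
      ((hα c hcIcc.2).continuousAt.eventually_mem hU).and
        ((hβ c hcIcc.2).continuousAt.eventually_mem hUβ)
    obtain ⟨δ, hδ, hδP⟩ := Metric.eventually_nhds_iff.mp hev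
    set ε := min (δ/2) (c - a) with hεdef
    have hε : 0 < ε := lt_min (by linarith) (by linarith)
    have hεδ : ε < δ := lt_of_le_of_lt (min_le_left _ _) (by linarith)
    have hmem : ∀ t ∈ Icc (c - ε) c, α t ∈ U ∧ β t ∈ U := by
      intro t ht
      apply hδP
      rw [Real.dist_eq, abs_lt]
      constructor <;> [linarith [ht.1]; linarith [ht.2]]
    have heqon : Set.EqOn α β (Icc (c - ε) c) := by
      apply ODE_solution_unique_of_mem_Icc_left (v := fun _ => v) (s := fun _ => U)
        (K := K) (fun _ _ => hL)
      · exact fun t ht => ((hα t (le_trans ht.2 hcIcc.2)).continuousAt).continuousWithinAt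
      · exact fun t ht => (hα t (le_trans ht.2 hcIcc.2)).hasDerivWithinAt
      · exact fun t ht => (hmem t (Ioc_subset_Icc_self ht)).1
      · exact fun t ht => ((hβ t (le_trans ht.2 hcIcc.2)).continuousAt).continuousWithinAt
      · exact fun t ht => (hβ t (le_trans ht.2 hcIcc.2)).hasDerivWithinAt
      · exact fun t ht => (hmem t (Ioc_subset_Icc_self ht)).2
      · exact hc.2
    have hcε : c - ε ∈ S := by
      refine ⟨⟨?_, by linarith [hcIcc.2]⟩, heqon ⟨le_rfl, by linarith⟩⟩
      have : ε ≤ c - a := min_le_right _ _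
      linarith
    have : c ≤ c - ε := csInf_le hScomp.bddBelow hcε
    linarith

/-- If `f ∈ 𝒪(Ω)` and `f(φ(t,x))/Q(φ(t,x))` is bounded on
`L × (−∞,0]` for each compact `L ⊆ Ω`, then
`(K₊f)(x,h) = √Q(x) ∫_{−∞}^0 e^{2t/h} f(φ(t,x))/Q(φ(t,x)) dt` is holomorphic
on `Ω` and solves `(K₊f)' + (2√Q/h − Q'/(2Q))·(K₊f) = f`. -/
theorem stmt9 (Q : Polynomial ℂ) (sq S : ℂ → ℂ) (Ω : Set ℂ) (φ : ℝ → ℂ → ℂ)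
    (f : ℂ → ℂ) (h : ℝ) (hh : 0 < h)
    (hΩ : IsOpen Ω) (hQ : ∀ x ∈ Ω, Q.eval x ≠ 0)
    (hsq : ∀ x ∈ Ω, sq x ^ 2 = Q.eval x)
    (hsqd : DifferentiableOn ℂ sq Ω)
    (hf : DifferentiableOn ℂ f Ω)
    (hflow0 : ∀ x ∈ Ω, φ 0 x = x)
    (hflowin : ∀ x ∈ Ω, ∀ t : ℝ, t ≤ 0 → φ t x ∈ Ω)
    (hflowode : ∀ x ∈ Ω, ∀ t : ℝ, t ≤ 0 →
      HasDerivAt (fun s => φ s x) (1 / sq (φ t x)) t)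
    (hflowhol : ∀ t : ℝ, t ≤ 0 → DifferentiableOn ℂ (fun x => φ t x) Ω)
    (hflowcont : ∀ x ∈ Ω, Continuous fun t : ℝ => φ t x)
    (hbdd : ∀ L : Set ℂ, L ⊆ Ω → IsCompact L → ∃ M_L : ℝ, ∀ x ∈ L, ∀ t : ℝ,
      t ≤ 0 → ‖f (φ t x) / Q.eval (φ t x)‖ ≤ M_L)
    (Kf : ℂ → ℂ)
    (hKf : ∀ x ∈ Ω, Kf x = sq x * ∫ t in Set.Iic (0 : ℝ),
      Complex.exp (2 * (t : ℂ) / (h : ℂ)) * (f (φ t x) / Q.eval (φ t x))) :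
    DifferentiableOn ℂ Kf Ω ∧ ∀ x ∈ Ω,
      HasDerivAt Kf
        (f x - (2 * sq x / (h : ℂ) - Q.derivative.eval x / (2 * Q.eval x)) * Kf x)
        x := by
  have hh' : (h : ℂ) ≠ 0 := by exact_mod_cast hh.ne'
  -- the full integrand
  set Fc : ℝ → ℂ → ℂ := fun t y =>
    Complex.exp (2 * (t : ℂ) / (h : ℂ)) * (f (φ t y) / Q.eval (φ t y)) with hFc
  set I : ℂ → ℂ := fun y => ∫ t in Set.Iic (0 : ℝ), Fc t y with hI
  have hKfI : ∀ x ∈ Ω, Kf x = sq x * I x := hKf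
  -- sq does not vanish on Ω
  have hsq0 : ∀ x ∈ Ω, sq x ≠ 0 := by
    intro x hx h0
    exact hQ x hx (by rw [← hsq x hx, h0]; ring)
  -- norm of the exponential factor
  have hnexp : ∀ t : ℝ, ‖Complex.exp (2 * (t : ℂ) / (h : ℂ))‖ = Real.exp (2 * t / h) := by
    intro t
    rw [show (2 * (t:ℂ) / (h:ℂ)) = ((2 * t / h : ℝ) : ℂ) by push_cast; ring]
    simp [Complex.norm_exp]
  -- the exponential is integrable on Iic 0
  have hexpint : IntegrableOn (fun t => Real.exp (2 * t / h)) (Iic (0:ℝ)) := by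
    have h0 : IntegrableOn Real.exp (Iic (0:ℝ)) := integrableOn_exp_Iic 0
    have h1 : Integrable ((Iic (0:ℝ)).indicator Real.exp) :=
      (integrable_indicator_iff measurableSet_Iic).2 h0
    have hpos : (0:ℝ) < 2 / h := by positivity
    have h2 := (integrable_comp_mul_left_iff ((Iic (0:ℝ)).indicator Real.exp) hpos.ne').2 h1
    have h3 : (fun x => (Iic (0:ℝ)).indicator Real.exp ((2/h) * x)) =
        (Iic (0:ℝ)).indicator (fun t => Real.exp (2 * t / h)) := by
      ext t
      by_cases ht : t ≤ 0
      · rw [Set.indicator_of_mem (by exact mul_nonpos_of_nonneg_of_nonpos hpos.le ht),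
          Set.indicator_of_mem (mem_Iic.2 ht)]
        congr 1; ring
      · rw [Set.indicator_of_notMem, Set.indicator_of_notMem (by simpa using ht)]
        simp only [mem_Iic, not_le]
        exact mul_pos hpos (not_le.mp ht)
    rw [h3] at h2
    exact (integrable_indicator_iff measurableSet_Iic).1 h2
  -- continuity of the integrand in t
  have hcontg : ∀ y ∈ Ω, ContinuousOn (fun t => Fc t y) (Iic (0:ℝ)) := by
    intro y hy
    have hmem : ∀ t ∈ Iic (0:ℝ), φ t y ∈ Ω := fun t ht => hflowin y hy t ht
    have hce : Continuous fun t : ℝ => Complex.exp (2 * (t:ℂ) / (h:ℂ)) :=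
      Complex.continuous_exp.comp ((continuous_const.mul Complex.continuous_ofReal).div_const _)
    have h1 : ContinuousOn (fun t => f (φ t y)) (Iic (0:ℝ)) :=
      hf.continuousOn.comp (hflowcont y hy).continuousOn hmem
    have h2 : ContinuousOn (fun t => Q.eval (φ t y)) (Iic (0:ℝ)) :=
      (Q.continuous_aeval.comp (hflowcont y hy)).continuousOn
    exact hce.continuousOn.mul (h1.div h2 fun t ht => hQ _ (hmem t ht))
  -- integrability of the integrand
  have hint : ∀ y ∈ Ω, IntegrableOn (fun t => Fc t y) (Iic (0:ℝ)) := by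
    intro y hy
    obtain ⟨M, hM⟩ := hbdd {y} (by simpa using hy) isCompact_singleton
    refine Integrable.mono' (g := fun t => Real.exp (2 * t / h) * M)
      (hexpint.mul_const M) ((hcontg y hy).aestronglyMeasurable measurableSet_Iic) ?_
    rw [ae_restrict_iff' measurableSet_Iic]
    filter_upwards with t ht
    rw [hFc]
    simp only [norm_mul]
    rw [hnexp t]
    exact mul_le_mul_of_nonneg_left (hM y rfl t ht) (Real.exp_nonneg _)
  -- slice holomorphy
  have hslice : ∀ t : ℝ, t ≤ 0 → DifferentiableOn ℂ (fun z => Fc t z) Ω := by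
    intro t ht
    have hmem : ∀ z ∈ Ω, φ t z ∈ Ω := fun z hz => hflowin z hz t ht
    have h1 : DifferentiableOn ℂ (fun z => f (φ t z)) Ω :=
      hf.comp (hflowhol t ht) hmem
    have h2 : DifferentiableOn ℂ (fun z => Q.eval (φ t z)) Ω :=
      (Q.differentiable.comp_differentiableOn (hflowhol t ht))
    exact (h1.div h2 fun z hz => hQ _ (hmem z hz)).const_mul _
  -- I is differentiable at each point of Ω
  have hIdiff : ∀ x ∈ Ω, DifferentiableAt ℂ I x := by
    intro x₀ hx₀
    obtain ⟨R, hR0, hRΩ⟩ := (Metric.nhds_basis_closedBall.mem_iff).1 (hΩ.mem_nhds hx₀)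
    set r := R / 2 with hrdef
    have hr0 : 0 < r := by positivity
    obtain ⟨M, hM⟩ := hbdd (closedBall x₀ R) hRΩ (isCompact_closedBall _ _)
    have hballΩ : ball x₀ r ⊆ Ω := fun z hz =>
      hRΩ (closedBall_subset_closedBall (by linarith) (ball_subset_closedBall hz))
    -- measurability of the derivative slice via difference quotients
    have hF'_meas : AEStronglyMeasurable (fun t => deriv (fun z => Fc t z) x₀)
        (volume.restrict (Iic (0:ℝ))) := by
      set u : ℕ → ℂ := fun n => x₀ + ((r / (n + 1) : ℝ) : ℂ) with hudef
      have hu_mem : ∀ n, u n ∈ Ω := by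
        intro n
        have hpos : (0:ℝ) < r / ((n:ℝ) + 1) := by positivity
        apply hRΩ
        rw [mem_closedBall, hudef]
        have h1 : dist (x₀ + ((r / ((n:ℝ) + 1) : ℝ) : ℂ)) x₀ = r / ((n:ℝ) + 1) := by
          rw [dist_eq_norm, add_sub_cancel_left, Complex.norm_real, Real.norm_eq_abs,
            abs_of_pos hpos]
        rw [h1]
        have h2 : r / ((n:ℝ) + 1) ≤ r := by
          rw [div_le_iff₀ (by positivity)]
          nlinarith [hr0.le]
        linarith
      have hu_ne : ∀ n, u n ≠ x₀ := by
        intro n hn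
        have hpos : (0:ℝ) < r / ((n:ℝ) + 1) := by positivity
        rw [hudef] at hn
        simp only [add_eq_left, Complex.ofReal_eq_zero] at hn
        exact hpos.ne' hn
      have hu_tend : Filter.Tendsto u Filter.atTop (nhdsWithin x₀ {x₀}ᶜ) := by
        refine tendsto_nhdsWithin_of_tendsto_nhds_of_eventually_within _ ?_
          (Filter.Eventually.of_forall fun n => hu_ne n)
        rw [hudef]
        have h0 : Filter.Tendsto (fun n : ℕ => (r / ((n:ℝ) + 1) : ℝ)) Filter.atTop (nhds 0) :=
          Filter.Tendsto.div_atTop tendsto_const_nhds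
            (Filter.tendsto_atTop_add_const_right _ 1 tendsto_natCast_atTop_atTop)
        have h2 : Filter.Tendsto (fun n : ℕ => ((r / ((n:ℝ) + 1) : ℝ) : ℂ)) Filter.atTop
            (nhds ((0:ℝ):ℂ)) := (Complex.continuous_ofReal.tendsto 0).comp h0
        have h3 := (tendsto_const_nhds (x := x₀) (f := Filter.atTop (α := ℕ))).add h2
        simpa using h3
      refine aestronglyMeasurable_of_tendsto_ae Filter.atTop
        (f := fun n t => (Fc t (u n) - Fc t x₀) / (u n - x₀)) (fun n => ?_) ?_
      · exact (((hcontg (u n) (hu_mem n)).sub (hcontg x₀ hx₀)).div_const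
          _).aestronglyMeasurable measurableSet_Iic
      · rw [ae_restrict_iff' measurableSet_Iic]
        filter_upwards with t ht
        have hder : HasDerivAt (fun z => Fc t z) (deriv (fun z => Fc t z) x₀) x₀ :=
          ((hslice t ht).differentiableAt (hΩ.mem_nhds hx₀)).hasDerivAt
        have := (hasDerivAt_iff_tendsto_slope.mp hder).comp hu_tend
        refine this.congr fun n => ?_
        simp [Function.comp, slope_def_field, div_eq_inv_mul]
    have hkey := hasDerivAt_integral_of_dominated_loc_of_deriv_le
      (μ := volume.restrict (Iic (0:ℝ))) (x₀ := x₀)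
      (F := fun y t => Fc t y)
      (F' := fun y t => deriv (fun z => Fc t z) y)
      (bound := fun t => Real.exp (2 * t / h) * M / r) (ball_mem_nhds x₀ hr0)
      ?_ (hint x₀ hx₀) hF'_meas ?_ ((hexpint.mul_const M).div_const r) ?_
    · exact hkey.2.differentiableAt
    · filter_upwards [hΩ.mem_nhds hx₀] with y hy
      exact (hcontg y hy).aestronglyMeasurable measurableSet_Iic
    · rw [ae_restrict_iff' measurableSet_Iic]
      filter_upwards with t ht
      intro y hy
      have hsub' : closedBall y r ⊆ closedBall x₀ R := by
        intro z hz
        rw [mem_closedBall] at *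
        calc dist z x₀ ≤ dist z y + dist y x₀ := dist_triangle _ _ _
          _ ≤ r + r := add_le_add hz (le_of_lt hy)
          _ = R := by rw [hrdef]; ring
      have hdc : DiffContOnCl ℂ (fun z => Fc t z) (ball y r) := by
        apply DifferentiableOn.diffContOnCl
        rw [closure_ball y hr0.ne']
        exact (hslice t ht).mono fun z hz => hRΩ (hsub' hz)
      have := Complex.norm_deriv_le_of_forall_mem_sphere_norm_le hr0 hdc
        (C := Real.exp (2 * t / h) * M) ?_
      · exact this
      · intro z hz
        have hzL : z ∈ closedBall x₀ R := hsub' (sphere_subset_closedBall hz)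
        rw [hFc]
        simp only [norm_mul]
        rw [hnexp t]
        exact mul_le_mul_of_nonneg_left (hM z hzL t ht) (Real.exp_nonneg _)
    · rw [ae_restrict_iff' measurableSet_Iic]
      filter_upwards with t ht
      intro y hy
      exact ((hslice t ht).differentiableAt (hΩ.mem_nhds (hballΩ hy))).hasDerivAt
  constructor
  · refine DifferentiableOn.congr (f := fun y => sq y * I y) ?_ hKfI
    exact hsqd.mul fun y hy => (hIdiff y hy).differentiableWithinAt
  intro x hx
  -- the semigroup property
  have hsemi : ∀ s : ℝ, s ≤ 0 → ∀ t : ℝ, t ≤ 0 → φ t (φ s x) = φ (t + s) x := by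
    intro s hs
    have hvd : DifferentiableOn ℂ (fun y => 1 / sq y) Ω :=
      (differentiableOn_const 1).div hsqd hsq0
    have hφs : φ s x ∈ Ω := hflowin x hx s hs
    refine aux_uniq hΩ hvd (α := fun u => φ u (φ s x)) (β := fun u => φ (u + s) x)
      ?_ ?_ ?_ ?_ ?_
    · intro u hu; exact hflowode (φ s x) hφs u hu
    · intro u hu; exact hflowin (φ s x) hφs u hu
    · intro u hu
      exact (hflowode x hx (u + s) (add_nonpos hu hs)).comp_add_const u s
    · intro u hu; exact hflowin x hx (u + s) (add_nonpos hu hs)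
    · show φ 0 (φ s x) = φ (0 + s) x
      rw [hflow0 (φ s x) hφs, zero_add]
  -- the ODE for I along the flow
  have hd : deriv I x = sq x * (f x / Q.eval x - 2 / (h:ℂ) * I x) := by
    set F0 : ℝ → ℂ := fun t => Fc t x with hF0
    have hF0int : IntegrableOn F0 (Iic (0:ℝ)) := hint x hx
    set J : ℝ → ℂ := fun s => ∫ t in Iic s, F0 t with hJdef
    -- I along the flow
    have hIφ : ∀ s : ℝ, s ≤ 0 →
        I (φ s x) = Complex.exp (-(2/(h:ℂ)) * s) * J s := by
      intro s hs
      have hstep : ∀ t ∈ Iic (0:ℝ),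
          Fc t (φ s x) = Complex.exp (-(2/(h:ℂ)) * s) * F0 (t + s) := by
        intro t ht
        have hkey : Complex.exp (-(2/(h:ℂ)) * s) * Complex.exp (2 * ((t + s : ℝ) : ℂ) / h)
            = Complex.exp (2 * (t:ℂ) / h) := by
          rw [← Complex.exp_add]
          congr 1
          push_cast
          field_simp
          ring
        rw [hFc]
        simp only
        rw [hsemi s hs t ht, ← hkey, mul_assoc]
      have htrans : ∫ t in Iic (0:ℝ), F0 (t + s) = ∫ u in Iic s, F0 u := by
        have hmp : MeasurePreserving (fun t : ℝ => t + s) volume volume :=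
          measurePreserving_add_right volume s
        have hemb : MeasurableEmbedding (fun t : ℝ => t + s) :=
          (Homeomorph.addRight s).measurableEmbedding
        have hpre : (fun t : ℝ => t + s) ⁻¹' (Iic s) = Iic (0:ℝ) := by
          ext t; simp
        rw [← hpre, hmp.setIntegral_preimage_emb hemb]
      calc I (φ s x) = ∫ t in Iic (0:ℝ), Complex.exp (-(2/(h:ℂ)) * s) * F0 (t + s) :=
            setIntegral_congr_fun measurableSet_Iic hstep
        _ = Complex.exp (-(2/(h:ℂ)) * s) * ∫ t in Iic (0:ℝ), F0 (t + s) := by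
            rw [integral_const_mul]
        _ = Complex.exp (-(2/(h:ℂ)) * s) * J s := by rw [htrans]
    -- J in terms of an interval integral
    have hJs : ∀ s : ℝ, s ≤ 0 → J s = J 0 + ∫ u in (0:ℝ)..s, F0 u := by
      intro s hs
      have hsplit : J 0 = J s + ∫ u in Ioc s 0, F0 u := by
        rw [hJdef]
        simp only
        rw [← setIntegral_union (Iic_disjoint_Ioc le_rfl) measurableSet_Ioc
          (hF0int.mono_set (Iic_subset_Iic.2 hs)) (hF0int.mono_set Ioc_subset_Iic_self),
          Iic_union_Ioc_eq_Iic hs]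
      have hio : ∫ u in (0:ℝ)..s, F0 u = -∫ u in Ioc s 0, F0 u := by
        rw [intervalIntegral.integral_symm, intervalIntegral.integral_of_le hs]
      rw [hio, hsplit]
      ring
    -- FTC for the interval-integral part
    have hFTC : HasDerivWithinAt (fun s => ∫ u in (0:ℝ)..s, F0 u) (F0 0) (Iic (0:ℝ)) 0 := by
      apply intervalIntegral.integral_hasDerivWithinAt_right (t := Iic (0:ℝ))
      · rw [intervalIntegrable_iff]
        simp
      · exact ⟨Iic 0, self_mem_nhdsWithin,
          (hcontg x hx).aestronglyMeasurable measurableSet_Iic⟩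
      · exact (hcontg x hx) 0 (mem_Iic.2 le_rfl)
    -- derivative of the exponential prefactor
    have hexp0 : HasDerivAt (fun s : ℝ => Complex.exp (-(2/(h:ℂ)) * s)) (-(2/(h:ℂ))) 0 := by
      have h1 : HasDerivAt (fun z : ℂ => Complex.exp (-(2/(h:ℂ)) * z))
          (Complex.exp (-(2/(h:ℂ)) * ((0:ℝ):ℂ)) * (-(2/(h:ℂ)) * 1)) ((0:ℝ):ℂ) :=
        ((hasDerivAt_id (((0:ℝ):ℂ))).const_mul (-(2/(h:ℂ)))).cexp
      have h2 := h1.comp_ofReal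
      simpa using h2
    -- derivative of B within Iic 0
    have hB : HasDerivWithinAt
        (fun s : ℝ => Complex.exp (-(2/(h:ℂ)) * s) * (J 0 + ∫ u in (0:ℝ)..s, F0 u))
        (-(2/(h:ℂ)) * I x + f x / Q.eval x) (Iic (0:ℝ)) 0 := by
      have hJ0 : J 0 = I x := rfl
      have hF00 : F0 0 = f x / Q.eval x := by
        rw [hF0, hFc]
        simp [hflow0 x hx]
      have := hexp0.hasDerivWithinAt.fun_mul (hFTC.const_add (J 0))
      simpa [hJ0, hF00, intervalIntegral.integral_same] using this
    -- within-derivative of I along the flow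
    have hA : HasDerivWithinAt (fun s : ℝ => I (φ s x))
        (-(2/(h:ℂ)) * I x + f x / Q.eval x) (Iic (0:ℝ)) 0 := by
      have hEq : Set.EqOn (fun s : ℝ => I (φ s x))
          (fun s : ℝ => Complex.exp (-(2/(h:ℂ)) * s) * (J 0 + ∫ u in (0:ℝ)..s, F0 u))
          (Iic (0:ℝ)) := by
        intro s hs
        simp only
        rw [hIφ s hs, hJs s hs]
      exact hB.congr hEq (hEq (mem_Iic.2 le_rfl))
    -- full derivative of I along the flow via the chain rule
    have hφ0 : HasDerivAt (fun s : ℝ => φ s x) (1 / sq x) 0 := by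
      have := hflowode x hx 0 le_rfl
      rwa [hflow0 x hx] at this
    have h1 : HasFDerivAt I (((1 : ℂ →L[ℂ] ℂ).smulRight (deriv I x)).restrictScalars ℝ)
        (φ 0 x) := by
      rw [hflow0 x hx]
      exact ((hIdiff x hx).hasDerivAt.hasFDerivAt).restrictScalars ℝ
    have hchain : HasDerivAt (fun s : ℝ => I (φ s x)) ((1 / sq x) * deriv I x) 0 := by
      have h2 := h1.comp_hasDerivAt 0 hφ0
      simpa [Function.comp_def, smul_eq_mul] using h2
    -- uniqueness of the one-sided derivative
    have hUD : UniqueDiffWithinAt ℝ (Iic (0:ℝ)) 0 := uniqueDiffOn_Iic 0 0 (mem_Iic.2 le_rfl)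
    have e1 := hchain.hasDerivWithinAt.derivWithin hUD
    have e2 := hA.derivWithin hUD
    have huniq : (1 / sq x) * deriv I x = -(2/(h:ℂ)) * I x + f x / Q.eval x :=
      e1.symm.trans e2
    have hsx := hsq0 x hx
    have hrw : deriv I x = sq x * ((1 / sq x) * deriv I x) := by
      field_simp
    rw [hrw, huniq]
    ring
  -- derivative of sq
  have hsqx : HasDerivAt sq (deriv sq x) x :=
    (hsqd.differentiableAt (hΩ.mem_nhds hx)).hasDerivAt
  have h2sqe : 2 * sq x * deriv sq x = Q.derivative.eval x := by
    have h1 : HasDerivAt (fun y => sq y ^ 2) (2 * sq x * deriv sq x) x := by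
      simpa [mul_comm, mul_assoc, mul_left_comm] using hsqx.fun_pow 2
    have h1' : HasDerivAt (fun y => Q.eval y) (2 * sq x * deriv sq x) x := by
      refine h1.congr_of_eventuallyEq ?_
      filter_upwards [hΩ.mem_nhds hx] with y hy
      exact (hsq y hy).symm
    exact h1'.unique (Q.hasDerivAt x)
  have hKd : HasDerivAt (fun y => sq y * I y) (deriv sq x * I x + sq x * deriv I x) x :=
    hsqx.mul (hIdiff x hx).hasDerivAt
  have hKfd : HasDerivAt Kf (deriv sq x * I x + sq x * deriv I x) x := by
    refine hKd.congr_of_eventuallyEq ?_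
    filter_upwards [hΩ.mem_nhds hx] with y hy
    exact hKfI y hy
  convert hKfd using 1
  have hsx := hsq0 x hx
  rw [hKfI x hx, hd, ← hsq x hx, ← h2sqe]
  field_simp
  ring
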